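/- In ℝ^n (n ≥ 3), the convex hull of the points {v^{ij} := ½(e^i+e^j) : 1 ≤ i < j ≤ n} equals {x ∈ Δ : x_i ≤ ½ for all i}, and for each j, the convex hull of {e^j} ∪ {v^{ij} : i ≠ j} equals {x ∈ Δ : x_j ≥ ½}, where Δ = {x ∈ ℝ^n_{≥0} : ∑x_i = 1}. -/

import Mathlib

open Finset

private lemma sum_vij {n : ℕ} {i j : Fin n} (hij : i ≠ j) :
    ∑ k : Fin n, (if k = i ∨ k = j then (1:ℝ)/2 else 0) = 1 := by
  have h : ∀ k : Fin n, (if k = i ∨ k = j then (1:ℝ)/2 else 0)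
      = if k ∈ ({i, j} : Finset (Fin n)) then (1:ℝ)/2 else 0 := by
    intro k; simp [Finset.mem_insert, Finset.mem_singleton]
  rw [Finset.sum_congr rfl fun k _ => h k, Finset.sum_ite_mem, Finset.univ_inter,
    Finset.sum_const, Finset.card_insert_of_notMem (by simpa using hij),
    Finset.card_singleton]
  norm_num

/-- No point of the slice has exactly one coordinate outside `{0, 1/2}`. -/
private lemma not_one_frac {n : ℕ} (x : Fin n → ℝ) (h0 : ∀ i, 0 ≤ x i)
    (h12 : ∀ i, x i ≤ 1/2) (hsum : ∑ i, x i = 1) :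
    (Finset.univ.filter (fun i => x i ≠ 0 ∧ x i ≠ 1/2)).card ≠ 1 := by
  classical
  intro hcard
  obtain ⟨a, hFa⟩ := Finset.card_eq_one.mp hcard
  have hdich : ∀ i : Fin n, i ≠ a → x i = 0 ∨ x i = 1/2 := by
    intro i hi
    by_contra h
    push_neg at h
    have : i ∈ Finset.univ.filter (fun i => x i ≠ 0 ∧ x i ≠ 1/2) :=
      Finset.mem_filter.mpr ⟨Finset.mem_univ _, h⟩
    rw [hFa] at this
    exact hi (Finset.mem_singleton.mp this)
  have haF : a ∈ Finset.univ.filter (fun i => x i ≠ 0 ∧ x i ≠ 1/2) := by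
    rw [hFa]; exact Finset.mem_singleton_self a
  have ha := (Finset.mem_filter.mp haF).2
  have hlt1 : 0 < x a := lt_of_le_of_ne (h0 a) (Ne.symm ha.1)
  have hlt2 : x a < 1/2 := lt_of_le_of_ne (h12 a) ha.2
  have hsplit : x a + ∑ i ∈ Finset.univ.erase a, x i = 1 := by
    rw [Finset.add_sum_erase _ _ (Finset.mem_univ a)]; exact hsum
  have hrest : ∑ i ∈ Finset.univ.erase a, x i
      = ∑ i ∈ (Finset.univ.erase a).filter (fun i => x i = 1/2), (1/2 : ℝ) := by
    rw [Finset.sum_filter]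
    refine Finset.sum_congr rfl fun i hi => ?_
    rcases hdich i (Finset.ne_of_mem_erase hi) with h | h <;> simp [h]
  set m := ((Finset.univ.erase a).filter (fun i => x i = 1/2)).card with hm
  rw [hrest, Finset.sum_const, nsmul_eq_mul] at hsplit
  have h1 : (1:ℝ) < m := by linarith
  have h2 : (m:ℝ) < 2 := by linarith
  have hm1 : 1 < m := by exact_mod_cast h1
  have hm2 : m < 2 := by exact_mod_cast h2
  omega

/-- Hard direction of part 1, by induction on the number of coordinates
outside `{0, 1/2}`. -/
private lemma hull1 {n : ℕ} (k : ℕ) : ∀ x : Fin n → ℝ, (∀ i, 0 ≤ x i) →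
    (∀ i, x i ≤ 1/2) → ∑ i, x i = 1 →
    (Finset.univ.filter (fun i => x i ≠ 0 ∧ x i ≠ 1/2)).card ≤ k →
    x ∈ convexHull ℝ {y : Fin n → ℝ |
      ∃ i j : Fin n, i ≠ j ∧ y = fun m => if m = i ∨ m = j then (1:ℝ)/2 else 0} := by
  classical
  induction k with
  | zero =>
    intro x h0 h12 hsum hcard
    have hF : Finset.univ.filter (fun i => x i ≠ 0 ∧ x i ≠ 1/2) = ∅ :=
      Finset.card_eq_zero.mp (Nat.le_zero.mp hcard)
    have hdich : ∀ i : Fin n, x i = 0 ∨ x i = 1/2 := by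
      intro i
      by_contra h
      push_neg at h
      have : i ∈ Finset.univ.filter (fun i => x i ≠ 0 ∧ x i ≠ 1/2) :=
        Finset.mem_filter.mpr ⟨Finset.mem_univ _, h⟩
      rw [hF] at this
      exact absurd this (Finset.notMem_empty i)
    set T := Finset.univ.filter (fun i => x i = 1/2) with hT
    have hsum2 : (T.card : ℝ) * (1/2) = 1 := by
      have : ∑ i ∈ T, (1/2 : ℝ) = 1 := by
        rw [hT, Finset.sum_filter]
        have heach : ∀ i ∈ Finset.univ, (if x i = 1/2 then (1/2:ℝ) else 0) = x i := by
          intro i _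
          rcases hdich i with h | h <;> simp [h]
        rw [Finset.sum_congr rfl heach, hsum]
      rwa [Finset.sum_const, nsmul_eq_mul] at this
    have hT2 : T.card = 2 := by
      have : (T.card : ℝ) = 2 := by linarith
      exact_mod_cast this
    obtain ⟨a, b, hab, hTab⟩ := Finset.card_eq_two.mp hT2
    have hxa : x a = 1/2 := by
      have : a ∈ T := by rw [hTab]; simp
      exact (Finset.mem_filter.mp this).2
    have hxb : x b = 1/2 := by
      have : b ∈ T := by rw [hTab]; simp
      exact (Finset.mem_filter.mp this).2
    have hx : x = fun m => if m = a ∨ m = b then (1:ℝ)/2 else 0 := by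
      funext m
      by_cases hma : m = a
      · subst hma; rw [if_pos (Or.inl rfl)]; exact hxa
      · by_cases hmb : m = b
        · subst hmb; rw [if_pos (Or.inr rfl)]; exact hxb
        · rw [if_neg (by tauto)]
          have hmT : m ∉ T := by rw [hTab]; simp [hma, hmb]
          have hm : x m ≠ 1/2 := by
            intro h
            exact hmT (Finset.mem_filter.mpr ⟨Finset.mem_univ _, h⟩)
          rcases hdich m with h | h
          · exact h
          · exact absurd h hm
    exact subset_convexHull ℝ _ ⟨a, b, hab, hx⟩
  | succ k ih =>
    intro x h0 h12 hsum hcard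
    by_cases hk : (Finset.univ.filter (fun i => x i ≠ 0 ∧ x i ≠ 1/2)).card ≤ k
    · exact ih x h0 h12 hsum hk
    push_neg at hk
    set F := Finset.univ.filter (fun i => x i ≠ 0 ∧ x i ≠ 1/2) with hFdef
    have hne := not_one_frac x h0 h12 hsum
    rw [← hFdef] at hne
    have hcard2 : 1 < F.card := by omega
    obtain ⟨a, haF, b, hbF, hab⟩ := Finset.one_lt_card.mp hcard2
    have ha := (Finset.mem_filter.mp haF).2
    have hb := (Finset.mem_filter.mp hbF).2
    have ha1 : 0 < x a := lt_of_le_of_ne (h0 a) (Ne.symm ha.1)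
    have ha2 : x a < 1/2 := lt_of_le_of_ne (h12 a) ha.2
    have hb1 : 0 < x b := lt_of_le_of_ne (h0 b) (Ne.symm hb.1)
    have hb2 : x b < 1/2 := lt_of_le_of_ne (h12 b) hb.2
    set t1 := min (1/2 - x a) (x b) with ht1def
    set t2 := min (x a) (1/2 - x b) with ht2def
    have ht1 : 0 < t1 := lt_min (by linarith) hb1
    have ht2 : 0 < t2 := lt_min ha1 (by linarith)
    have ht1a : t1 ≤ 1/2 - x a := min_le_left _ _
    have ht1b : t1 ≤ x b := min_le_right _ _
    have ht2a : t2 ≤ x a := min_le_left _ _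
    have ht2b : t2 ≤ 1/2 - x b := min_le_right _ _
    set y : Fin n → ℝ := fun i => if i = a then x a + t1 else if i = b then x b - t1 else x i
      with hydef
    set z : Fin n → ℝ := fun i => if i = a then x a - t2 else if i = b then x b + t2 else x i
      with hzdef
    have hyi : ∀ i, y i = x i + ((if i = a then t1 else 0) - (if i = b then t1 else 0)) := by
      intro i
      rw [hydef]
      dsimp only
      by_cases h1 : i = a
      · have h2 : i ≠ b := by rw [h1]; exact hab
        rw [if_pos h1, if_pos h1, if_neg h2, h1]; ring
      · by_cases h2 : i = b
        · rw [if_neg h1, if_pos h2, if_neg h1, if_pos h2, h2]; ring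
        · rw [if_neg h1, if_neg h2, if_neg h1, if_neg h2]; ring
    have hzi : ∀ i, z i = x i - ((if i = a then t2 else 0) - (if i = b then t2 else 0)) := by
      intro i
      rw [hzdef]
      dsimp only
      by_cases h1 : i = a
      · have h2 : i ≠ b := by rw [h1]; exact hab
        rw [if_pos h1, if_pos h1, if_neg h2, h1]; ring
      · by_cases h2 : i = b
        · rw [if_neg h1, if_pos h2, if_neg h1, if_pos h2, h2]; ring
        · rw [if_neg h1, if_neg h2, if_neg h1, if_neg h2]; ring
    have hysum : ∑ i, y i = 1 := by
      rw [Finset.sum_congr rfl fun i _ => hyi i, Finset.sum_add_distrib,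
        Finset.sum_sub_distrib, Finset.sum_ite_eq', Finset.sum_ite_eq']
      simp [hsum]
    have hzsum : ∑ i, z i = 1 := by
      rw [Finset.sum_congr rfl fun i _ => hzi i, Finset.sum_sub_distrib,
        Finset.sum_sub_distrib, Finset.sum_ite_eq', Finset.sum_ite_eq']
      simp [hsum]
    have hy0 : ∀ i, 0 ≤ y i := by
      intro i
      rw [hydef]
      dsimp only
      by_cases h1 : i = a
      · rw [if_pos h1]; linarith
      · rw [if_neg h1]
        by_cases h2 : i = b
        · rw [if_pos h2]; linarith
        · rw [if_neg h2]; exact h0 i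
    have hy12 : ∀ i, y i ≤ 1/2 := by
      intro i
      rw [hydef]
      dsimp only
      by_cases h1 : i = a
      · rw [if_pos h1]; linarith
      · rw [if_neg h1]
        by_cases h2 : i = b
        · rw [if_pos h2]; linarith
        · rw [if_neg h2]; exact h12 i
    have hz0 : ∀ i, 0 ≤ z i := by
      intro i
      rw [hzdef]
      dsimp only
      by_cases h1 : i = a
      · rw [if_pos h1]; linarith
      · rw [if_neg h1]
        by_cases h2 : i = b
        · rw [if_pos h2]; linarith
        · rw [if_neg h2]; exact h0 i
    have hz12 : ∀ i, z i ≤ 1/2 := by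
      intro i
      rw [hzdef]
      dsimp only
      by_cases h1 : i = a
      · rw [if_pos h1]; linarith
      · rw [if_neg h1]
        by_cases h2 : i = b
        · rw [if_pos h2]; linarith
        · rw [if_neg h2]; exact h12 i
    -- the fractional sets of y and z are strictly smaller
    have hysub : Finset.univ.filter (fun i => y i ≠ 0 ∧ y i ≠ 1/2) ⊆ F := by
      intro i hi
      by_cases h1 : i = a
      · subst h1; exact haF
      by_cases h2 : i = b
      · subst h2; exact hbF
      have := (Finset.mem_filter.mp hi).2
      rw [hydef] at this
      simp only [if_neg h1, if_neg h2] at this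
      exact Finset.mem_filter.mpr ⟨Finset.mem_univ _, this⟩
    have hzsub : Finset.univ.filter (fun i => z i ≠ 0 ∧ z i ≠ 1/2) ⊆ F := by
      intro i hi
      by_cases h1 : i = a
      · subst h1; exact haF
      by_cases h2 : i = b
      · subst h2; exact hbF
      have := (Finset.mem_filter.mp hi).2
      rw [hzdef] at this
      simp only [if_neg h1, if_neg h2] at this
      exact Finset.mem_filter.mpr ⟨Finset.mem_univ _, this⟩
    have hyex : ∃ c ∈ F, c ∉ Finset.univ.filter (fun i => y i ≠ 0 ∧ y i ≠ 1/2) := by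
      rcases le_total (1/2 - x a) (x b) with h | h
      · refine ⟨a, haF, fun hmem => ?_⟩
        have hya : y a = 1/2 := by
          rw [hydef]; dsimp only; rw [if_pos rfl, ht1def, min_eq_left h]; ring
        exact (Finset.mem_filter.mp hmem).2.2 hya
      · refine ⟨b, hbF, fun hmem => ?_⟩
        have hyb : y b = 0 := by
          rw [hydef]; dsimp only
          rw [if_neg (Ne.symm hab), if_pos rfl, ht1def, min_eq_right h, sub_self]
        exact (Finset.mem_filter.mp hmem).2.1 hyb
    have hzex : ∃ c ∈ F, c ∉ Finset.univ.filter (fun i => z i ≠ 0 ∧ z i ≠ 1/2) := by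
      rcases le_total (x a) (1/2 - x b) with h | h
      · refine ⟨a, haF, fun hmem => ?_⟩
        have hza : z a = 0 := by
          rw [hzdef]; dsimp only; rw [if_pos rfl, ht2def, min_eq_left h, sub_self]
        exact (Finset.mem_filter.mp hmem).2.1 hza
      · refine ⟨b, hbF, fun hmem => ?_⟩
        have hzb : z b = 1/2 := by
          rw [hzdef]; dsimp only
          rw [if_neg (Ne.symm hab), if_pos rfl, ht2def, min_eq_right h]; ring
        exact (Finset.mem_filter.mp hmem).2.2 hzb
    have hycard : (Finset.univ.filter (fun i => y i ≠ 0 ∧ y i ≠ 1/2)).card ≤ k := by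
      have := Finset.card_lt_card ((Finset.ssubset_iff_of_subset hysub).mpr hyex)
      omega
    have hzcard : (Finset.univ.filter (fun i => z i ≠ 0 ∧ z i ≠ 1/2)).card ≤ k := by
      have := Finset.card_lt_card ((Finset.ssubset_iff_of_subset hzsub).mpr hzex)
      omega
    have hymem := ih y hy0 hy12 hysum hycard
    have hzmem := ih z hz0 hz12 hzsum hzcard
    have hts : t1 + t2 ≠ 0 := by positivity
    have hxeq : x = (t2/(t1+t2)) • y + (t1/(t1+t2)) • z := by
      funext i
      simp only [Pi.add_apply, Pi.smul_apply, smul_eq_mul]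
      rw [hyi i, hzi i]
      by_cases h1 : i = a
      · have h2 : i ≠ b := by rw [h1]; exact hab
        rw [if_pos h1, if_neg h2, if_pos h1, if_neg h2]
        field_simp
        ring
      · by_cases h2 : i = b
        · rw [if_neg h1, if_pos h2, if_neg h1, if_pos h2]
          field_simp
          ring
        · rw [if_neg h1, if_neg h2, if_neg h1, if_neg h2]
          field_simp
          ring
    rw [hxeq]
    exact (convex_convexHull ℝ _) hymem hzmem (by positivity) (by positivity)
      (by rw [← add_div, add_comm t2 t1, div_self hts])

/-- in `ℝⁿ` (`n ≥ 3`), the convex hull of the midpoints `v^{ij} = ½(eⁱ+eʲ)`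
equals `{x ∈ Δ : xᵢ ≤ ½ for all i}`, and for each `j` the convex hull of
`{eʲ} ∪ {v^{ij} : i ≠ j}` equals `{x ∈ Δ : xⱼ ≥ ½}`, where `Δ` is the standard simplex. -/
theorem xi_decomposition (n : ℕ) (hn : 3 ≤ n)
    (e : Fin n → (Fin n → ℝ)) (he : ∀ i, e i = fun k => if k = i then 1 else 0)
    (v : Fin n → Fin n → (Fin n → ℝ))
    (hv : ∀ i j, v i j = fun k => if k = i ∨ k = j then (1 : ℝ)/2 else 0) :
    (convexHull ℝ {x | ∃ i j : Fin n, i ≠ j ∧ x = v i j}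
      = {x : Fin n → ℝ | (∀ i, 0 ≤ x i) ∧ (∑ i, x i) = 1 ∧ ∀ i, x i ≤ 1/2}) ∧
    (∀ j : Fin n, convexHull ℝ ({e j} ∪ {x | ∃ i : Fin n, i ≠ j ∧ x = v i j})
      = {x : Fin n → ℝ | (∀ i, 0 ≤ x i) ∧ (∑ i, x i) = 1 ∧ 1/2 ≤ x j}) := by
  classical
  constructor
  · apply Set.Subset.antisymm
    · apply convexHull_min
      · rintro w ⟨i, j, hij, rfl⟩
        refine ⟨?_, ?_, ?_⟩
        · intro m; rw [hv]; dsimp only; split_ifs <;> norm_num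
        · rw [hv]; exact sum_vij hij
        · intro m; rw [hv]; dsimp only; split_ifs <;> norm_num
      · intro p hp q hq s t hs ht hst
        refine ⟨fun i => ?_, ?_, fun i => ?_⟩
        · simp only [Pi.add_apply, Pi.smul_apply, smul_eq_mul]
          exact add_nonneg (mul_nonneg hs (hp.1 i)) (mul_nonneg ht (hq.1 i))
        · simp only [Pi.add_apply, Pi.smul_apply, smul_eq_mul]
          rw [Finset.sum_add_distrib, ← Finset.mul_sum, ← Finset.mul_sum,
            hp.2.1, hq.2.1]
          linarith
        · simp only [Pi.add_apply, Pi.smul_apply, smul_eq_mul]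
          have := hp.2.2 i
          have := hq.2.2 i
          nlinarith
    · rintro x ⟨h0, hsum, h12⟩
      have := hull1 (n := n) (Finset.univ.filter
        (fun i => x i ≠ 0 ∧ x i ≠ 1/2)).card x h0 h12 hsum le_rfl
      convert this using 2
      ext w
      constructor
      · rintro ⟨i, j, hij, rfl⟩; exact ⟨i, j, hij, hv i j⟩
      · rintro ⟨i, j, hij, rfl⟩; exact ⟨i, j, hij, (hv i j).symm⟩
  · intro j
    apply Set.Subset.antisymm
    · apply convexHull_min
      · rintro w (hw | ⟨i, hij, rfl⟩)
        · rw [Set.mem_singleton_iff] at hw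
          subst hw
          rw [he]
          refine ⟨?_, ?_, ?_⟩
          · intro m; dsimp only; split_ifs <;> norm_num
          · simp [Finset.sum_ite_eq']
          · norm_num
        · refine ⟨?_, ?_, ?_⟩
          · intro m; rw [hv]; dsimp only; split_ifs <;> norm_num
          · rw [hv]; exact sum_vij hij
          · rw [hv]; simp
      · intro p hp q hq s t hs ht hst
        refine ⟨fun i => ?_, ?_, ?_⟩
        · simp only [Pi.add_apply, Pi.smul_apply, smul_eq_mul]
          exact add_nonneg (mul_nonneg hs (hp.1 i)) (mul_nonneg ht (hq.1 i))
        · simp only [Pi.add_apply, Pi.smul_apply, smul_eq_mul]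
          rw [Finset.sum_add_distrib, ← Finset.mul_sum, ← Finset.mul_sum,
            hp.2.1, hq.2.1]
          linarith
        · simp only [Pi.add_apply, Pi.smul_apply, smul_eq_mul]
          have := hp.2.2
          have := hq.2.2
          nlinarith
    · rintro x ⟨h0, hsum, hj⟩
      set w : Fin n → ℝ := fun i => if i = j then 2 * x j - 1 else 2 * x i with hwdef
      set z : Fin n → (Fin n → ℝ) := fun i => if i = j then e j else v i j with hzdef
      have hw0 : ∀ i ∈ Finset.univ, 0 ≤ w i := by
        intro i _
        rw [hwdef]
        dsimp only
        split_ifs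
        · linarith
        · linarith [h0 i]
      have hwsum : ∑ i, w i = 1 := by
        rw [← Finset.add_sum_erase _ _ (Finset.mem_univ j)]
        have h1 : w j = 2 * x j - 1 := by simp [hwdef]
        have h2 : ∑ i ∈ Finset.univ.erase j, w i = ∑ i ∈ Finset.univ.erase j, 2 * x i := by
          refine Finset.sum_congr rfl fun i hi => ?_
          simp [hwdef, Finset.ne_of_mem_erase hi]
        have h3 : ∑ i ∈ Finset.univ.erase j, x i = 1 - x j := by
          rw [Finset.sum_erase_eq_sub (Finset.mem_univ j), hsum]
        rw [h1, h2, ← Finset.mul_sum, h3]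
        ring
      have hxeq : x = ∑ i, w i • z i := by
        funext m
        rw [Finset.sum_apply]
        simp only [Pi.smul_apply, smul_eq_mul]
        by_cases hm : m = j
        · subst hm
          rw [← Finset.add_sum_erase _ (fun i => w i * z i m) (Finset.mem_univ m)]
          have h1 : w m * z m m = 2 * x m - 1 := by
            simp [hwdef, hzdef, he]
          have h2 : ∀ i ∈ Finset.univ.erase m, w i * z i m = x i := by
            intro i hi
            have hi' := Finset.ne_of_mem_erase hi
            simp [hwdef, hzdef, hi', hv]
            ring
          rw [h1, Finset.sum_congr rfl h2, Finset.sum_erase_eq_sub (Finset.mem_univ m), hsum]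
          ring
        · have h2 : ∀ i ∈ Finset.univ, i ≠ m → w i * z i m = 0 := by
            intro i _ him
            by_cases hij : i = j
            · subst hij
              simp [hwdef, hzdef, he, hm]
            · simp [hwdef, hzdef, hij, hv, Ne.symm him, hm]
          rw [Finset.sum_eq_single_of_mem m (Finset.mem_univ m) h2]
          simp [hwdef, hzdef, hm, hv]
          ring
      have hz : ∀ i ∈ Finset.univ, z i ∈ ({e j} ∪ {x | ∃ i : Fin n, i ≠ j ∧ x = v i j} : Set _) := by
        intro i _
        rw [hzdef]
        dsimp only
        split_ifs with h
        · exact Or.inl rfl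
        · exact Or.inr ⟨i, h, rfl⟩
      have := Finset.centerMass_mem_convexHull Finset.univ hw0 (by rw [hwsum]; norm_num) hz
      rwa [Finset.centerMass_eq_of_sum_1 _ _ hwsum, ← hxeq] at this
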